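/- Let H be obtained from a graph G with vertex set {v_1,…,v_k} by expanding each vertex v_i by a module M_i = (V_i, E_i). Then the number of minimal separators of H is at most the number of minimal separators of G plus the sum over i = 1,…,k of the number of minimal separators of M_i. -/

import Mathlib

open SimpleGraph

universe u

/-- Reachability in `G − S`: there is a walk whose support avoids `S`. -/
def AvoidReach {V : Type u} (G : SimpleGraph V) (S : Set V) (u v : V) : Prop :=
  ∃ w : G.Walk u v, ∀ x ∈ w.support, x ∉ S

/-- `S` is a `u,v`-separator of `G`: `u, v ∉ S` and `u,v` lie in different
connected components of `G − S`. -/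
def IsSep {V : Type u} (G : SimpleGraph V) (S : Set V) (u v : V) : Prop :=
  u ∉ S ∧ v ∉ S ∧ ¬ AvoidReach G S u v

/-- `S` is a minimal `u,v`-separator of `G`. -/
def IsMinSep {V : Type u} (G : SimpleGraph V) (S : Set V) (u v : V) : Prop :=
  IsSep G S u v ∧ ∀ T ⊂ S, ¬ IsSep G T u v

/-- `S` is a minimal separator of `G`. -/
def IsMinimalSeparator {V : Type u} (G : SimpleGraph V) (S : Set V) : Prop :=
  ∃ u v, IsMinSep G S u v

/-- `C` is a connected component of `G − S`. -/
def IsCompOf {V : Type u} (G : SimpleGraph V) (S C : Set V) : Prop :=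
  ∃ v, v ∉ S ∧ C = {x | AvoidReach G S v x}

/-- The neighbourhood of a vertex set `A`: vertices outside `A` with a neighbour in `A`. -/
def setNbhd {V : Type u} (G : SimpleGraph V) (A : Set V) : Set V :=
  {x | x ∉ A ∧ ∃ a ∈ A, G.Adj x a}

/-- `C` is a full component of `G − S` associated to `S`, i.e. `N(C) = S`. -/
def IsFullCompOf {V : Type u} (G : SimpleGraph V) (S C : Set V) : Prop :=
  IsCompOf G S C ∧ setNbhd G C = S

/-- `W` is a vertex cover of `G`. -/
def IsVC {V : Type u} (G : SimpleGraph V) (W : Set V) : Prop :=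
  ∀ ⦃a b⦄, G.Adj a b → a ∈ W ∨ b ∈ W

/-- The vertex cover number `vc(G)`. -/
noncomputable def vcNum {V : Type u} (G : SimpleGraph V) : ℕ :=
  sInf {n | ∃ W : Set V, IsVC G W ∧ W.ncard = n}

/-- A graph is chordal if every cycle on four or more vertices has a chord, i.e. an
edge of the graph between two vertices of the cycle that is not an edge of the cycle. -/
def IsChordalG {V : Type u} (G : SimpleGraph V) : Prop :=
  ∀ (v : V) (w : G.Walk v v), w.IsCycle → 4 ≤ w.length →
    ∃ x ∈ w.support, ∃ y ∈ w.support, G.Adj x y ∧ s(x, y) ∉ w.edges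

/-- `H` is a minimal triangulation of `G`: a chordal supergraph of `G` such that no graph
strictly between `G` and `H` is chordal. -/
def IsMinimalTriangulation {V : Type u} (G H : SimpleGraph V) : Prop :=
  G ≤ H ∧ IsChordalG H ∧ ∀ F : SimpleGraph V, G ≤ F → F < H → ¬ IsChordalG F

/-- `Ω` is a maximal clique of `H`. -/
def IsMaxClique {V : Type u} (H : SimpleGraph V) (Ω : Set V) : Prop :=
  H.IsClique Ω ∧ ∀ t : Set V, H.IsClique t → Ω ⊆ t → t = Ω

/-- `Ω` is a potential maximal clique of `G`: a maximal clique of some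
minimal triangulation of `G`. -/
def IsPMC {V : Type u} (G : SimpleGraph V) (Ω : Set V) : Prop :=
  ∃ H : SimpleGraph V, IsMinimalTriangulation G H ∧ IsMaxClique H Ω

/-- The graph `H` obtained from `G` (with vertex set `{v_1, …, v_k} = Fin k`) by expanding
each vertex `i` by the module `M i`: the vertex set is the disjoint union `Σ i, V i`;
within each `V i` the edges are those of `M i`, and `a ∈ V i` is adjacent to `b ∈ V j`
(`i ≠ j`) iff `i` and `j` are adjacent in `G`. -/
def expandG {k : ℕ} {V : Fin k → Type u} (G : SimpleGraph (Fin k))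
    (M : ∀ i, SimpleGraph (V i)) : SimpleGraph (Σ i, V i) :=
  SimpleGraph.fromRel (fun a b =>
    (∃ h : a.1 = b.1, (M b.1).Adj (h ▸ a.2) b.2) ∨ (a.1 ≠ b.1 ∧ G.Adj a.1 b.1))

/-- The set of vertices of the expanded graph coming from the module `M i`,
i.e. the copy of `V i`. -/
def modSet {k : ℕ} {V : Fin k → Type u} (i : Fin k) : Set (Σ i, V i) := {x | x.1 = i}

section AuxExpand

variable {k : ℕ} {V : Fin k → Type} {G : SimpleGraph (Fin k)} {M : ∀ i, SimpleGraph (V i)}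

lemma expand_adj_same {i : Fin k} {a b : V i} :
    (expandG G M).Adj ⟨i,a⟩ ⟨i,b⟩ ↔ (M i).Adj a b := by
  constructor
  · rintro ⟨hne, h | h⟩
    · rcases h with ⟨h, h'⟩ | ⟨h, _⟩
      · exact h'
      · exact absurd rfl h
    · rcases h with ⟨h, h'⟩ | ⟨h, _⟩
      · exact h'.symm
      · exact absurd rfl h
  · intro h
    exact ⟨by simp [h.ne], Or.inl (Or.inl ⟨rfl, h⟩)⟩

lemma expand_adj_ne {x y : Σ i, V i} (hxy : x.1 ≠ y.1) :
    (expandG G M).Adj x y ↔ G.Adj x.1 y.1 := by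
  constructor
  · rintro ⟨hne, h | h⟩
    · rcases h with ⟨h, _⟩ | ⟨_, h'⟩
      · exact absurd h hxy
      · exact h'
    · rcases h with ⟨h, _⟩ | ⟨_, h'⟩
      · exact absurd h.symm hxy
      · exact h'.symm
  · intro h
    exact ⟨fun he => hxy (congrArg Sigma.fst he), Or.inl (Or.inr ⟨hxy, h⟩)⟩

lemma proj_walk : ∀ {x y : Σ i, V i} (w : (expandG G M).Walk x y),
    ∃ q : G.Walk x.1 y.1, ∀ j ∈ q.support, ∃ z ∈ w.support, z.1 = j := by
  intro x y w
  induction w with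
  | nil => exact ⟨SimpleGraph.Walk.nil, by simp⟩
  | @cons x z y h w' ih =>
    obtain ⟨q', hq'⟩ := ih
    by_cases hxz : x.1 = z.1
    · refine ⟨q'.copy hxz.symm rfl, ?_⟩
      intro j hj
      rw [SimpleGraph.Walk.support_copy] at hj
      obtain ⟨z', hz', hz'1⟩ := hq' j hj
      exact ⟨z', by simp [hz'], hz'1⟩
    · have hadj : G.Adj x.1 z.1 := (expand_adj_ne hxz).1 h
      refine ⟨SimpleGraph.Walk.cons hadj q', ?_⟩
      intro j hj
      rw [SimpleGraph.Walk.support_cons, List.mem_cons] at hj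
      rcases hj with rfl | hj
      · exact ⟨x, by simp, rfl⟩
      · obtain ⟨z', hz', hz'1⟩ := hq' j hj
        exact ⟨z', by simp [hz'], hz'1⟩

lemma lift_walk (S : Set (Σ i, V i)) :
    ∀ {i j : Fin k} (q : G.Walk i j) (a : V i) (b : V j),
    (∀ m ∈ q.support, ∃ c : V m, (⟨m,c⟩ : Σ i, V i) ∉ S) →
    (⟨i,a⟩ : Σ i, V i) ∉ S → (⟨j,b⟩ : Σ i, V i) ∉ S → i ≠ j →
    ∃ w : (expandG G M).Walk ⟨i,a⟩ ⟨j,b⟩, ∀ x ∈ w.support, x ∉ S := by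
  intro i j q
  induction q with
  | nil => intro a b _ _ _ hij; exact absurd rfl hij
  | @cons i m j h q' ih =>
    intro a b hsup ha hb hij
    by_cases hmj : m = j
    · subst hmj
      have hadj : (expandG G M).Adj ⟨i,a⟩ ⟨m,b⟩ := (expand_adj_ne (by exact h.ne)).2 h
      refine ⟨SimpleGraph.Walk.cons hadj SimpleGraph.Walk.nil, ?_⟩
      intro x hx
      simp only [SimpleGraph.Walk.support_cons, SimpleGraph.Walk.support_nil, List.mem_cons,
        List.mem_singleton] at hx
      rcases hx with rfl | rfl | h
      · exact ha
      · exact hb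
      · exact absurd h (by simp)
    · obtain ⟨c, hc⟩ := hsup m (by simp)
      obtain ⟨w', hw'⟩ := ih c b (fun m' hm' => hsup m' (by simp [hm'])) hc hb hmj
      have hadj : (expandG G M).Adj ⟨i,a⟩ ⟨m,c⟩ := (expand_adj_ne (by exact h.ne)).2 h
      refine ⟨SimpleGraph.Walk.cons hadj w', ?_⟩
      intro x hx
      rw [SimpleGraph.Walk.support_cons, List.mem_cons] at hx
      rcases hx with rfl | hx
      · exact ha
      · exact hw' x hx

lemma crossing {i : Fin k} : ∀ {x y : Σ i, V i} (w : (expandG G M).Walk x y), x.1 = i →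
    ∀ z ∈ w.support, z.1 ≠ i →
    ∃ z' ∈ w.support, z'.1 ≠ i ∧ G.Adj i z'.1 := by
  intro x y w
  induction w with
  | nil =>
    intro hx z hz hzi
    rw [SimpleGraph.Walk.support_nil, List.mem_singleton] at hz
    exact absurd (hz ▸ hx) hzi
  | @cons x m y h w' ih =>
    intro hx z hz hzi
    by_cases hmi : m.1 = i
    · have hz' : z ∈ w'.support := by
        rw [SimpleGraph.Walk.support_cons, List.mem_cons] at hz
        rcases hz with rfl | hz
        · exact absurd hx hzi
        · exact hz
      obtain ⟨z', hz'1, hz'2, hz'3⟩ := ih hmi z hz' hzi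
      exact ⟨z', by simp [hz'1], hz'2, hz'3⟩
    · have hadj : G.Adj x.1 m.1 := (expand_adj_ne (by rw [hx]; exact fun he => hmi he.symm)).1 h
      exact ⟨m, by simp, hmi, hx ▸ hadj⟩

lemma proj_module {i : Fin k} : ∀ {x y : Σ i, V i} (w : (expandG G M).Walk x y)
    {a b : V i}, x = ⟨i,a⟩ → y = ⟨i,b⟩ →
    (∀ z ∈ w.support, z.1 = i) →
    ∃ p : (M i).Walk a b, ∀ c ∈ p.support, (⟨i,c⟩ : Σ i, V i) ∈ w.support := by
  intro x y w
  induction w with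
  | nil =>
    intro a b hx hy hall
    obtain rfl : a = b := by rw [hx] at hy; exact (Sigma.mk.inj_iff.1 hy).2.eq
    exact ⟨SimpleGraph.Walk.nil, by simp [hx]⟩
  | @cons x z y h w' ih =>
    intro a b hx hy hall
    subst hx
    have hz1 : z.1 = i := hall z (by simp)
    obtain ⟨j, c⟩ := z
    obtain rfl : j = i := hz1
    have hadj := expand_adj_same.1 h
    obtain ⟨p', hp'⟩ := ih rfl hy (fun z hz => hall z (by simp [hz]))
    refine ⟨SimpleGraph.Walk.cons hadj p', ?_⟩
    intro d hd
    rw [SimpleGraph.Walk.support_cons, List.mem_cons] at hd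
    rcases hd with rfl | hd
    · simp
    · exact List.mem_cons_of_mem _ (hp' d hd)

/-- The canonical embedding of a module into the expanded graph, as a graph homomorphism. -/
def modHom (i : Fin k) : (M i) →g (expandG G M) where
  toFun := Sigma.mk i
  map_rel' := fun h => expand_adj_same.2 h

/-- Every minimal separator of the expanded graph is either the preimage of a minimal
separator of `G`, or is built from a minimal separator of a module `M i` together with
all modules adjacent to `i`. -/
lemma dichotomy (S : Set (Σ i, V i)) (h : IsMinimalSeparator (expandG G M) S) :
    (∃ T : Set (Fin k), IsMinimalSeparator G T ∧ S = {x | x.1 ∈ T}) ∨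
    (∃ (i : Fin k) (A : Set (V i)), IsMinimalSeparator (M i) A ∧
      S = (Sigma.mk i '' A) ∪ {x : Σ i, V i | G.Adj x.1 i}) := by
  obtain ⟨u, v, ⟨hu, hv, hnr⟩, hmin⟩ := h
  by_cases hciv : u.1 = v.1
  · -- both endpoints in the same module
    right
    obtain ⟨i, a⟩ := u
    obtain ⟨i', b⟩ := v
    obtain rfl : i = i' := hciv
    set Nbr : Set (Σ i, V i) := {x | G.Adj x.1 i} with hNbrdef
    set Si : Set (V i) := {c | (⟨i,c⟩ : Σ i, V i) ∈ S} with hSidef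
    have hNbr : Nbr ⊆ S := by
      intro x hx
      by_contra hxS
      have hxi : x.1 ≠ i := hx.ne
      have adj1 : (expandG G M).Adj ⟨i,a⟩ x :=
        (expand_adj_ne (fun he => hxi he.symm)).2 hx.symm
      have adj2 : (expandG G M).Adj x ⟨i,b⟩ := (expand_adj_ne hxi).2 hx
      apply hnr
      refine ⟨SimpleGraph.Walk.cons adj1 (SimpleGraph.Walk.cons adj2 SimpleGraph.Walk.nil), ?_⟩
      intro z hz
      simp only [SimpleGraph.Walk.support_cons, SimpleGraph.Walk.support_nil, List.mem_cons,
        List.mem_singleton] at hz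
      rcases hz with rfl | rfl | rfl | h
      · exact hu
      · exact hxS
      · exact hv
      · exact absurd h (by simp)
    have hsubS : Sigma.mk i '' Si ∪ Nbr ⊆ S := by
      rintro x (⟨c, hc, rfl⟩ | hN)
      · exact hc
      · exact hNbr hN
    have hnotmem : ∀ c : V i, c ∉ Si → (⟨i,c⟩ : Σ i, V i) ∉ Sigma.mk i '' Si ∪ Nbr := by
      rintro c hc (⟨d, hd, hde⟩ | hN)
      · obtain rfl : d = c := (Sigma.mk.inj_iff.1 hde).2.eq
        exact hc hd
      · exact G.irrefl hN
    have hsep : IsSep (expandG G M) (Sigma.mk i '' Si ∪ Nbr) ⟨i,a⟩ ⟨i,b⟩ := by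
      refine ⟨hnotmem a hu, hnotmem b hv, ?_⟩
      rintro ⟨w, hw⟩
      by_cases hall : ∀ z ∈ w.support, z.1 = i
      · apply hnr
        refine ⟨w, fun z hz hzS => ?_⟩
        have hz1 := hall z hz
        obtain ⟨j, c⟩ := z
        obtain rfl : j = i := hz1
        exact hw _ hz (Or.inl ⟨c, hzS, rfl⟩)
      · push_neg at hall
        obtain ⟨z, hz, hzi⟩ := hall
        obtain ⟨z', hz', hz'1, hz'2⟩ := crossing w rfl z hz hzi
        exact hw z' hz' (Or.inr hz'2.symm)
    have heq : Sigma.mk i '' Si ∪ Nbr = S := by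
      by_contra hne
      exact hmin _ (Set.ssubset_iff_subset_ne.mpr ⟨hsubS, hne⟩) hsep
    refine ⟨i, Si, ⟨a, b, ⟨hu, hv, ?_⟩, ?_⟩, heq.symm⟩
    · -- Si separates a b in M i
      rintro ⟨p, hp⟩
      apply hnr
      refine ⟨p.map (modHom i), ?_⟩
      intro x hx
      replace hx : x ∈ p.support.map (modHom (G := G) (M := M) i) := by rw [← SimpleGraph.Walk.support_map]; exact hx
      obtain ⟨c, hc, rfl⟩ := List.mem_map.1 hx
      exact hp c hc
    · -- minimality of Si
      intro T hT hTsep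
      obtain ⟨c, hcSi, hcT⟩ := Set.exists_of_ssubset hT
      have hsub'' : Sigma.mk i '' T ∪ Nbr ⊆ S := by
        rintro x (⟨d, hd, rfl⟩ | hN)
        · exact hT.subset hd
        · exact hNbr hN
      have hss : Sigma.mk i '' T ∪ Nbr ⊂ S := by
        rw [Set.ssubset_iff_of_subset hsub'']
        refine ⟨⟨i, c⟩, hcSi, ?_⟩
        rintro (⟨d, hd, hde⟩ | hN)
        · obtain rfl : d = c := (Sigma.mk.inj_iff.1 hde).2.eq
          exact hcT hd
        · exact G.irrefl hN
      apply hmin _ hss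
      have hnotmem' : ∀ c : V i, c ∉ T → (⟨i,c⟩ : Σ i, V i) ∉ Sigma.mk i '' T ∪ Nbr := by
        rintro d hd (⟨e, he, hde⟩ | hN)
        · obtain rfl : e = d := (Sigma.mk.inj_iff.1 hde).2.eq
          exact hd he
        · exact G.irrefl hN
      refine ⟨hnotmem' a hTsep.1, hnotmem' b hTsep.2.1, ?_⟩
      rintro ⟨w, hw⟩
      have hall : ∀ z ∈ w.support, z.1 = i := by
        intro z hz
        by_contra hzi
        obtain ⟨z', hz', h1, h2⟩ := crossing w rfl z hz hzi
        exact hw z' hz' (Or.inr h2.symm)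
      obtain ⟨p, hp⟩ := proj_module w rfl rfl hall
      apply hTsep.2.2
      exact ⟨p, fun d hd hdT => hw _ (hp d hd) (Or.inl ⟨d, hdT, rfl⟩)⟩
  · -- endpoints in different modules
    left
    set T0 : Set (Fin k) := {j | ∀ c : V j, (⟨j,c⟩ : Σ i, V i) ∈ S} with hT0def
    have huT0 : u.1 ∉ T0 := fun h => hu (h u.2)
    have hvT0 : v.1 ∉ T0 := fun h => hv (h v.2)
    have hT0reach : ¬ AvoidReach G T0 u.1 v.1 := by
      rintro ⟨q, hq⟩
      have hex : ∀ m ∈ q.support, ∃ c : V m, (⟨m,c⟩ : Σ i, V i) ∉ S := by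
        intro m hm
        by_contra hc
        push_neg at hc
        exact hq m hm hc
      obtain ⟨w, hw⟩ := lift_walk S q u.2 v.2 hex hu hv hciv
      exact hnr ⟨w, hw⟩
    have hT0sep : IsSep G T0 u.1 v.1 := ⟨huT0, hvT0, hT0reach⟩
    obtain ⟨T, hTmem, hTmin⟩ :=
      Set.Finite.exists_minimalFor id _ (Set.toFinite {T : Set (Fin k) | T ⊆ T0 ∧ IsSep G T u.1 v.1})
        ⟨T0, subset_rfl, hT0sep⟩
    have hTms : IsMinimalSeparator G T := by
      refine ⟨u.1, v.1, hTmem.2, fun T' hT' hT'sep => ?_⟩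
      have := hTmin ⟨hT'.subset.trans hTmem.1, hT'sep⟩ hT'.subset
      exact absurd (hT'.subset.antisymm this) (ne_of_ssubset hT')
    have hPsub : {x : Σ i, V i | x.1 ∈ T} ⊆ S := fun x hx => hTmem.1 hx x.2
    have hPsep : IsSep (expandG G M) {x : Σ i, V i | x.1 ∈ T} u v := by
      refine ⟨fun h => huT0 (hTmem.1 h), fun h => hvT0 (hTmem.1 h), ?_⟩
      rintro ⟨w, hw⟩
      apply hTmem.2.2.2
      obtain ⟨q, hq⟩ := proj_walk w
      refine ⟨q, fun j hj hjT => ?_⟩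
      obtain ⟨z, hz, rfl⟩ := hq j hj
      exact hw z hz hjT
    have heq : {x : Σ i, V i | x.1 ∈ T} = S := by
      by_contra hne
      exact hmin _ (Set.ssubset_iff_subset_ne.mpr ⟨hPsub, hne⟩) hPsep
    exact ⟨T, hTms, heq.symm⟩

end AuxExpand

lemma nat_card_sigma' {k : ℕ} (α : Fin k → Type) [∀ i, Finite (α i)] :
    Nat.card (Σ i, α i) = ∑ i, Nat.card (α i) := by
  letI := fun i => Fintype.ofFinite (α i)
  simp [Nat.card_eq_fintype_card, Fintype.card_sigma]



theorem statement_10 {k : ℕ} {V : Fin k → Type} [∀ i, Fintype (V i)]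
    (G : SimpleGraph (Fin k)) (M : ∀ i, SimpleGraph (V i)) :
    {S : Set (Σ i, V i) | IsMinimalSeparator (expandG G M) S}.ncard ≤
      {S : Set (Fin k) | IsMinimalSeparator G S}.ncard +
        ∑ i : Fin k, {S : Set (V i) | IsMinimalSeparator (M i) S}.ncard := by
  classical
  set sH := {S : Set (Σ i, V i) | IsMinimalSeparator (expandG G M) S} with hsHdef
  set A := {T : Set (Fin k) | IsMinimalSeparator G T} with hAdef
  set C := {p : (j : Fin k) × Set (V j) | IsMinimalSeparator (M p.1) p.2} with hCdef
  have spec : ∀ S : Set (Σ i, V i), ∃ r : Set (Fin k) ⊕ ((j : Fin k) × Set (V j)),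
      S ∈ sH →
        (∃ T, r = Sum.inl T ∧ IsMinimalSeparator G T ∧ S = {x : Σ i, V i | x.1 ∈ T}) ∨
        (∃ (i : Fin k) (A' : Set (V i)), r = Sum.inr ⟨i, A'⟩ ∧ IsMinimalSeparator (M i) A' ∧
          S = Sigma.mk i '' A' ∪ {x : Σ i, V i | G.Adj x.1 i}) := by
    intro S
    by_cases hS : S ∈ sH
    · rcases dichotomy S hS with ⟨T, h1, h2⟩ | ⟨i, A', h1, h2⟩
      · exact ⟨Sum.inl T, fun _ => Or.inl ⟨T, rfl, h1, h2⟩⟩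
      · exact ⟨Sum.inr ⟨i, A'⟩, fun _ => Or.inr ⟨i, A', rfl, h1, h2⟩⟩
    · exact ⟨Sum.inl ∅, fun h => absurd h hS⟩
  choose f hf using spec
  have maps : ∀ S ∈ sH, f S ∈ Sum.inl '' A ∪ Sum.inr '' C := by
    intro S hS
    rcases hf S hS with ⟨T, hr, h1, _⟩ | ⟨i, A', hr, h1, _⟩
    · exact Or.inl ⟨T, h1, hr.symm⟩
    · exact Or.inr ⟨⟨i, A'⟩, h1, hr.symm⟩
  have inj : Set.InjOn f sH := by
    intro S hS S' hS' he
    rcases hf S hS with ⟨T, hr, _, h2⟩ | ⟨i, A', hr, _, h2⟩ <;>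
      rcases hf S' hS' with ⟨T', hr', _, h2'⟩ | ⟨i', A'', hr', _, h2'⟩
    · obtain rfl : T = T' := Sum.inl.inj (hr.symm.trans (he.trans hr'))
      rw [h2, h2']
    · exact absurd (hr.symm.trans (he.trans hr')) (by simp)
    · exact absurd (hr.symm.trans (he.trans hr')) (by simp)
    · have hpq : (⟨i, A'⟩ : (j : Fin k) × Set (V j)) = ⟨i', A''⟩ :=
        Sum.inr.inj (hr.symm.trans (he.trans hr'))
      obtain ⟨h1', h2''⟩ := Sigma.mk.inj_iff.1 hpq
      subst h1'
      obtain rfl : A' = A'' := h2''.eq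
      rw [h2, h2']
  have h1 : sH.ncard ≤ (Sum.inl '' A ∪ Sum.inr '' C).ncard :=
    Set.ncard_le_ncard_of_injOn f maps inj (Set.toFinite _)
  have h2 : (Sum.inl '' A ∪ Sum.inr '' C).ncard ≤ (Sum.inl '' A).ncard + (Sum.inr '' C).ncard :=
    Set.ncard_union_le _ _
  have h3 : (Sum.inl '' A : Set (Set (Fin k) ⊕ ((j : Fin k) × Set (V j)))).ncard = A.ncard :=
    Set.ncard_image_of_injective _ Sum.inl_injective
  have h4 : (Sum.inr '' C : Set (Set (Fin k) ⊕ ((j : Fin k) × Set (V j)))).ncard = C.ncard :=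
    Set.ncard_image_of_injective _ Sum.inr_injective
  have h5 : C.ncard = ∑ i : Fin k, {S : Set (V i) | IsMinimalSeparator (M i) S}.ncard := by
    rw [← Nat.card_coe_set_eq]
    have e : ↥C ≃ Σ i : Fin k, ↥{S : Set (V i) | IsMinimalSeparator (M i) S} :=
      { toFun := fun x => ⟨x.1.1, ⟨x.1.2, x.2⟩⟩
        invFun := fun x => ⟨⟨x.1, x.2.1⟩, x.2.2⟩
        left_inv := fun x => rfl
        right_inv := fun x => rfl }
    rw [Nat.card_congr e, nat_card_sigma']
    refine Finset.sum_congr rfl fun i _ => ?_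
    rw [← Nat.card_coe_set_eq]
  calc sH.ncard ≤ (Sum.inl '' A ∪ Sum.inr '' C).ncard := h1
    _ ≤ (Sum.inl '' A).ncard + (Sum.inr '' C).ncard := h2
    _ = A.ncard + ∑ i : Fin k, {S : Set (V i) | IsMinimalSeparator (M i) S}.ncard := by
        rw [h3, h4, h5]
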